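/- arXiv:2305.00175 — 5 statements merged into one kernel-verified Lean document; each statement's English description precedes it below -/
import Mathlib

section
/- Let A and B be finite sets of equal cardinality m, and let μ : A → B be a bijection in a metric space (𝒳, D). Then there exists a bijection μ̂ : A → B such that μ̂(x) = x for every x ∈ A ∩ B, and ∑_{x∈A} D(x, μ̂(x)) ≤ ∑_{x∈A} D(x, μ(x)). -/
private theorem stmt_8_aux {𝒳 : Type*} [MetricSpace 𝒳] [DecidableEq 𝒳]
    (A B : Finset 𝒳) :
    ∀ n : ℕ, ∀ μ : 𝒳 → 𝒳, Set.BijOn μ ↑A ↑B →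
      ((A ∩ B).filter (fun x => μ x ≠ x)).card ≤ n →
      ∃ ν : 𝒳 → 𝒳, Set.BijOn ν ↑A ↑B ∧ (∀ x ∈ A ∩ B, ν x = x) ∧
        ∑ x ∈ A, dist x (ν x) ≤ ∑ x ∈ A, dist x (μ x) := by
  intro n
  induction n with
  | zero =>
    intro μ hμ hcard
    refine ⟨μ, hμ, ?_, le_refl _⟩
    intro x hx
    by_contra h
    have hmem : x ∈ (A ∩ B).filter (fun x => μ x ≠ x) := Finset.mem_filter.2 ⟨hx, h⟩
    have := Finset.card_eq_zero.mp (Nat.le_zero.mp hcard)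
    simp [this] at hmem
  | succ n ih =>
    intro μ hμ hcard
    by_cases hemp : ((A ∩ B).filter (fun x => μ x ≠ x)) = ∅
    · refine ⟨μ, hμ, ?_, le_refl _⟩
      intro x hx
      by_contra h
      have hmem : x ∈ (A ∩ B).filter (fun x => μ x ≠ x) := Finset.mem_filter.2 ⟨hx, h⟩
      simp [hemp] at hmem
    · obtain ⟨x, hx⟩ := Finset.nonempty_of_ne_empty hemp
      obtain ⟨hxAB, hxne⟩ := Finset.mem_filter.mp hx
      have hxA : x ∈ A := (Finset.mem_inter.mp hxAB).1
      have hxB : x ∈ B := (Finset.mem_inter.mp hxAB).2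
      -- x ∈ B, so there is y ∈ A with μ y = x
      obtain ⟨y, hyA', hyx⟩ := hμ.surjOn (by exact_mod_cast hxB : (x : 𝒳) ∈ (B : Set 𝒳))
      have hyA : y ∈ A := by exact_mod_cast hyA'
      have hxy : x ≠ y := by
        intro h; apply hxne; rw [h] at hyx ⊢; exact hyx
      -- swap bijection on A
      have hswap : Set.BijOn (Equiv.swap x y) ↑A ↑A := by
        refine ⟨?_, (Equiv.swap x y).injective.injOn, ?_⟩
        · intro z hz
          rcases eq_or_ne z x with rfl | hzx
          · simpa [Equiv.swap_apply_left] using (by exact_mod_cast hyA : (y:𝒳) ∈ (A:Set 𝒳))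
          rcases eq_or_ne z y with rfl | hzy
          · simpa [Equiv.swap_apply_right] using (by exact_mod_cast hxA : (x:𝒳) ∈ (A:Set 𝒳))
          · simpa [Equiv.swap_apply_of_ne_of_ne hzx hzy] using hz
        · intro z hz
          refine ⟨Equiv.swap x y z, ?_, by simp⟩
          rcases eq_or_ne z x with rfl | hzx
          · simpa [Equiv.swap_apply_left] using (by exact_mod_cast hyA : (y:𝒳) ∈ (A:Set 𝒳))
          rcases eq_or_ne z y with rfl | hzy
          · simpa [Equiv.swap_apply_right] using (by exact_mod_cast hxA : (x:𝒳) ∈ (A:Set 𝒳))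
          · simpa [Equiv.swap_apply_of_ne_of_ne hzx hzy] using hz
      set μ' : 𝒳 → 𝒳 := fun z => μ (Equiv.swap x y z) with hμ'def
      have hμ'bij : Set.BijOn μ' ↑A ↑B := hμ.comp hswap
      -- new filter card decreases
      have hsub : ((A ∩ B).filter (fun z => μ' z ≠ z)) ⊆
          ((A ∩ B).filter (fun z => μ z ≠ z)).erase x := by
        intro z hz
        obtain ⟨hzAB, hzne⟩ := Finset.mem_filter.mp hz
        rcases eq_or_ne z x with rfl | hzx
        · exfalso; apply hzne; simp [hμ'def, Equiv.swap_apply_left, hyx]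
        rcases eq_or_ne z y with rfl | hzy
        · refine Finset.mem_erase.2 ⟨hxy.symm, Finset.mem_filter.2 ⟨hzAB, ?_⟩⟩
          rw [hyx]; exact hxy
        · refine Finset.mem_erase.2 ⟨hzx, Finset.mem_filter.2 ⟨hzAB, ?_⟩⟩
          simpa [hμ'def, Equiv.swap_apply_of_ne_of_ne hzx hzy] using hzne
      have hcard' : ((A ∩ B).filter (fun z => μ' z ≠ z)).card ≤ n := by
        have h1 := Finset.card_le_card hsub
        have h2 : (((A ∩ B).filter (fun z => μ z ≠ z)).erase x).card
            = ((A ∩ B).filter (fun z => μ z ≠ z)).card - 1 :=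
          Finset.card_erase_of_mem hx
        have h3 : 1 ≤ ((A ∩ B).filter (fun z => μ z ≠ z)).card :=
          Finset.card_pos.mpr ⟨x, hx⟩
        omega
      have hcard'' : ((A ∩ B).filter (fun z => μ' z ≠ z)).card ≤ n := hcard'
      -- sum inequality
      have hyAx : y ∈ A.erase x := Finset.mem_erase.2 ⟨Ne.symm hxy, hyA⟩
      have keysum : ∀ f : 𝒳 → ℝ, ∑ z ∈ A, f z = f x + (f y + ∑ z ∈ (A.erase x).erase y, f z) := by
        intro f
        rw [Finset.add_sum_erase _ f hyAx, Finset.add_sum_erase _ f hxA]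
      have hsumle : ∑ z ∈ A, dist z (μ' z) ≤ ∑ z ∈ A, dist z (μ z) := by
        rw [keysum (fun z => dist z (μ' z)), keysum (fun z => dist z (μ z))]
        have heq : ∑ z ∈ (A.erase x).erase y, dist z (μ' z)
            = ∑ z ∈ (A.erase x).erase y, dist z (μ z) := by
          refine Finset.sum_congr rfl ?_
          intro z hz
          obtain ⟨hzy, hz'⟩ := Finset.mem_erase.mp hz
          obtain ⟨hzx, _⟩ := Finset.mem_erase.mp hz'
          simp [hμ'def, Equiv.swap_apply_of_ne_of_ne hzx hzy]
        rw [heq]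
        have h1 : dist x (μ' x) = 0 := by simp [hμ'def, Equiv.swap_apply_left, hyx]
        have h2 : dist y (μ' y) = dist y (μ x) := by simp [hμ'def, Equiv.swap_apply_right]
        rw [h1, h2]
        have htri : dist y (μ x) ≤ dist y x + dist x (μ x) := dist_triangle _ _ _
        have : dist y x = dist y (μ y) := by rw [hyx]
        nlinarith [dist_nonneg (x := y) (y := μ y)]
      obtain ⟨ν, hν1, hν2, hν3⟩ := ih μ' hμ'bij hcard''
      exact ⟨ν, hν1, hν2, le_trans hν3 hsumle⟩

theorem stmt_8 {𝒳 : Type*} [MetricSpace 𝒳] [DecidableEq 𝒳] (m : ℕ)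
    (A B : Finset 𝒳) (hA : A.card = m) (hB : B.card = m)
    (μ : 𝒳 → 𝒳) (hμ : Set.BijOn μ ↑A ↑B) :
    ∃ ν : 𝒳 → 𝒳, Set.BijOn ν ↑A ↑B ∧ (∀ x ∈ A ∩ B, ν x = x) ∧
      ∑ x ∈ A, dist x (ν x) ≤ ∑ x ∈ A, dist x (μ x) := by
  exact stmt_8_aux A B _ μ hμ le_rfl
end

section
/- Let A and B be finite sets of equal cardinality m in a metric space (𝒳, D), and let μ : A → B be a bijection. Then there exists a bijection μ̂ : A → B such that μ̂(x) = x for every x ∈ A ∩ B, and ∑_{x∈A} D(x, μ̂(x))² ≤ m · ∑_{x∈A} D(x, μ(x))². -/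
private lemma stmt_9_aux {𝒳 : Type*} [MetricSpace 𝒳] [DecidableEq 𝒳]
    (A B : Finset 𝒳) :
    ∀ n (μ : 𝒳 → 𝒳), Set.BijOn μ ↑A ↑B →
      ((A ∩ B).filter (fun x => μ x ≠ x)).card ≤ n →
      ∃ ν : 𝒳 → 𝒳, Set.BijOn ν ↑A ↑B ∧ (∀ x ∈ A ∩ B, ν x = x) ∧
        ∑ x ∈ A, dist x (ν x) ≤ ∑ x ∈ A, dist x (μ x) := by
  intro n
  induction n with
  | zero =>
    intro μ hμ hcard
    refine ⟨μ, hμ, ?_, le_refl _⟩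
    intro x hx
    by_contra h
    have : x ∈ (A ∩ B).filter (fun x => μ x ≠ x) := Finset.mem_filter.2 ⟨hx, h⟩
    have := Finset.card_pos.2 ⟨x, this⟩
    omega
  | succ n ih =>
    intro μ hμ hcard
    by_cases hS : ((A ∩ B).filter (fun x => μ x ≠ x)).Nonempty
    · obtain ⟨x, hxS⟩ := hS
      rw [Finset.mem_filter] at hxS
      obtain ⟨hxAB, hmux⟩ := hxS
      have hxA : x ∈ A := (Finset.mem_inter.1 hxAB).1
      have hxB : x ∈ B := (Finset.mem_inter.1 hxAB).2
      obtain ⟨y, hyA, hyx⟩ := hμ.2.2 (by exact_mod_cast hxB)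
      have hyA : y ∈ A := by exact_mod_cast hyA
      have hyne : y ≠ x := by
        intro h; rw [h] at hyx; exact hmux hyx
      set μ' : 𝒳 → 𝒳 := μ ∘ (Equiv.swap x y) with hμ'def
      have hswap : Set.BijOn (Equiv.swap x y) ↑A ↑A := by
        refine ⟨?_, (Equiv.swap x y).injective.injOn, ?_⟩
        · intro z hz
          rcases eq_or_ne z x with rfl | hzx
          · simpa [Equiv.swap_apply_left] using hyA
          rcases eq_or_ne z y with rfl | hzy
          · simpa [Equiv.swap_apply_right] using hxA
          · simpa [Equiv.swap_apply_of_ne_of_ne hzx hzy] using hz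
        · intro z hz
          rcases eq_or_ne z x with hzx | hzx
          · exact ⟨y, hyA, by rw [hzx]; exact Equiv.swap_apply_right x y⟩
          rcases eq_or_ne z y with hzy' | hzy
          · exact ⟨x, hxA, by rw [hzy']; exact Equiv.swap_apply_left x y⟩
          · exact ⟨z, hz, Equiv.swap_apply_of_ne_of_ne hzx hzy⟩
      have hμ' : Set.BijOn μ' ↑A ↑B := hμ.comp hswap
      have hμ'x : μ' x = x := by simp [hμ'def, Equiv.swap_apply_left, hyx]
      have hμ'y : μ' y = μ x := by simp [hμ'def, Equiv.swap_apply_right]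
      have hμ'z : ∀ z, z ≠ x → z ≠ y → μ' z = μ z := fun z h1 h2 => by
        simp [hμ'def, Equiv.swap_apply_of_ne_of_ne h1 h2]
      have hsub : (A ∩ B).filter (fun z => μ' z ≠ z) ⊆
          ((A ∩ B).filter (fun z => μ z ≠ z)).erase x := by
        intro z hz
        rw [Finset.mem_filter] at hz
        obtain ⟨hzAB, hz'⟩ := hz
        have hzx : z ≠ x := by
          intro h; rw [h, hμ'x] at hz'; exact hz' rfl
        refine Finset.mem_erase.2 ⟨hzx, Finset.mem_filter.2 ⟨hzAB, ?_⟩⟩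
        rcases eq_or_ne z y with rfl | hzy
        · rw [hyx]; exact hyne.symm
        · rw [← hμ'z z hzx hzy]; exact hz'
      have hcard' : ((A ∩ B).filter (fun z => μ' z ≠ z)).card ≤ n := by
        have h1 := Finset.card_le_card hsub
        have h2 : (((A ∩ B).filter (fun z => μ z ≠ z)).erase x).card =
            ((A ∩ B).filter (fun z => μ z ≠ z)).card - 1 :=
          Finset.card_erase_of_mem (Finset.mem_filter.2 ⟨hxAB, hmux⟩)
        have h3 : 0 < ((A ∩ B).filter (fun z => μ z ≠ z)).card :=
          Finset.card_pos.2 ⟨x, Finset.mem_filter.2 ⟨hxAB, hmux⟩⟩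
        omega
      obtain ⟨ν, hν, hνfix, hνsum⟩ := ih μ' hμ' hcard'
      refine ⟨ν, hν, hνfix, hνsum.trans ?_⟩
      -- ∑ dist z (μ' z) ≤ ∑ dist z (μ z)
      have hyA' : y ∈ A.erase x := Finset.mem_erase.2 ⟨hyne, hyA⟩
      rw [← Finset.add_sum_erase A _ hxA, ← Finset.add_sum_erase (A.erase x) _ hyA',
        ← Finset.add_sum_erase A (fun z => dist z (μ z)) hxA,
        ← Finset.add_sum_erase (A.erase x) (fun z => dist z (μ z)) hyA']
      have heq : ∑ z ∈ (A.erase x).erase y, dist z (μ' z) =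
          ∑ z ∈ (A.erase x).erase y, dist z (μ z) := by
        refine Finset.sum_congr rfl fun z hz => ?_
        rw [Finset.mem_erase, Finset.mem_erase] at hz
        rw [hμ'z z hz.2.1 hz.1]
      rw [heq, hμ'x, hμ'y, dist_self, hyx]
      have : dist y (μ x) ≤ dist y x + dist x (μ x) := dist_triangle y x (μ x)
      linarith [this, dist_comm y x]
    · refine ⟨μ, hμ, ?_, le_refl _⟩
      intro z hz
      by_contra h
      exact hS ⟨z, Finset.mem_filter.2 ⟨hz, h⟩⟩

theorem stmt_9 {𝒳 : Type*} [MetricSpace 𝒳] [DecidableEq 𝒳] (m : ℕ)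
    (A B : Finset 𝒳) (hA : A.card = m) (hB : B.card = m)
    (μ : 𝒳 → 𝒳) (hμ : Set.BijOn μ ↑A ↑B) :
    ∃ ν : 𝒳 → 𝒳, Set.BijOn ν ↑A ↑B ∧ (∀ x ∈ A ∩ B, ν x = x) ∧
      ∑ x ∈ A, dist x (ν x) ^ 2 ≤ (m : ℝ) * ∑ x ∈ A, dist x (μ x) ^ 2 := by
  obtain ⟨ν, hν, hfix, hsum⟩ := stmt_9_aux A B _ μ hμ le_rfl
  refine ⟨ν, hν, hfix, ?_⟩
  have h1 : ∑ x ∈ A, dist x (ν x) ^ 2 ≤ (∑ x ∈ A, dist x (ν x)) ^ 2 := by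
    rw [sq]
    calc ∑ x ∈ A, dist x (ν x) ^ 2
        ≤ ∑ x ∈ A, dist x (ν x) * ∑ z ∈ A, dist z (ν z) := by
          refine Finset.sum_le_sum fun i hi => ?_
          rw [sq]
          exact mul_le_mul_of_nonneg_left
            (Finset.single_le_sum (f := fun z => dist z (ν z)) (fun z _ => dist_nonneg) hi) dist_nonneg
      _ = (∑ x ∈ A, dist x (ν x)) * ∑ z ∈ A, dist z (ν z) := by
          rw [← Finset.sum_mul]
  have h2 : (∑ x ∈ A, dist x (ν x)) ^ 2 ≤ (∑ x ∈ A, dist x (μ x)) ^ 2 := by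
    apply pow_le_pow_left₀ (Finset.sum_nonneg fun _ _ => dist_nonneg) hsum
  have h3 : (∑ x ∈ A, dist x (μ x)) ^ 2 ≤ (m : ℝ) * ∑ x ∈ A, dist x (μ x) ^ 2 := by
    have := sq_sum_le_card_mul_sum_sq (s := A) (f := fun x => dist x (μ x))
    rwa [hA] at this
  linarith
end

section
/- In the setting of the swapped partition, for z = 1: ∑_{j=1}^k ∑_{x ∈ X'_j} D(x, f_j) ≤ ∑_{j=1}^k ∑_{x ∈ X_j} D(x, f_j) + ∑_{x ∈ X₀} D(x, μ̂(x)). -/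
theorem stmt_11 {𝒳 : Type*} [MetricSpace 𝒳] [DecidableEq 𝒳]
    (X X₀ Xh : Finset 𝒳) (k : ℕ) (Xc : Fin k → Finset 𝒳) (f : Fin k → 𝒳) (μ : 𝒳 → 𝒳)
    (h0 : X₀ ⊆ X) (hh : Xh ⊆ X) (hcard : Xh.card = X₀.card)
    (hdisj : ∀ i j, i ≠ j → Disjoint (Xc i) (Xc j))
    (hdisj0 : ∀ i, Disjoint X₀ (Xc i))
    (hcover : X₀ ∪ Finset.univ.biUnion Xc = X)
    (hbij : Set.BijOn μ ↑X₀ ↑Xh)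
    (hid : ∀ x ∈ X₀ ∩ Xh, μ x = x) :
    ∑ j, ∑ x ∈ (Xc j \ Xh) ∪ X₀.filter (fun x => μ x ∈ Xc j ∩ Xh), dist x (f j)
      ≤ ∑ j, ∑ x ∈ Xc j, dist x (f j) + ∑ x ∈ X₀, dist x (μ x) := by
  set F : Fin k → Finset 𝒳 := fun j => X₀.filter (fun x => μ x ∈ Xc j ∩ Xh) with hF
  have hFsub : ∀ j, F j ⊆ X₀ := fun j => Finset.filter_subset _ _
  have hdisjU : ∀ j, Disjoint (Xc j \ Xh) (F j) := by
    intro j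
    refine Finset.disjoint_left.mpr fun x hx hx' => ?_
    exact (Finset.disjoint_right.mp (hdisj0 j)) ((Finset.mem_sdiff.mp hx).1) (hFsub j hx')
  -- image of F j under μ is Xc j ∩ Xh
  have himg : ∀ j, (F j).image μ = Xc j ∩ Xh := by
    intro j
    ext y
    simp only [Finset.mem_image, hF, Finset.mem_filter]
    constructor
    · rintro ⟨x, ⟨_, hx⟩, rfl⟩; exact hx
    · intro hy
      obtain ⟨x, hx, hxy⟩ := hbij.surjOn (Finset.mem_inter.mp hy).2
      exact ⟨x, ⟨hx, by rw [hxy]; exact hy⟩, hxy⟩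
  have hsum_img : ∀ j, ∑ x ∈ F j, dist (μ x) (f j) = ∑ y ∈ Xc j ∩ Xh, dist y (f j) := by
    intro j
    rw [← himg j, Finset.sum_image]
    intro x hx y hy hxy
    exact hbij.injOn (hFsub j hx) (hFsub j hy) hxy
  have step1 : ∀ j, ∑ x ∈ (Xc j \ Xh) ∪ F j, dist x (f j)
      ≤ ∑ x ∈ Xc j, dist x (f j) + ∑ x ∈ F j, dist x (μ x) := by
    intro j
    rw [Finset.sum_union (hdisjU j)]
    have htri : ∑ x ∈ F j, dist x (f j)
        ≤ ∑ x ∈ F j, dist x (μ x) + ∑ x ∈ F j, dist (μ x) (f j) := by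
      rw [← Finset.sum_add_distrib]
      exact Finset.sum_le_sum fun x _ => dist_triangle x (μ x) (f j)
    have hsplit : ∑ x ∈ Xc j \ Xh, dist x (f j) + ∑ y ∈ Xc j ∩ Xh, dist y (f j)
        = ∑ x ∈ Xc j, dist x (f j) := by
      rw [add_comm]; exact Finset.sum_inter_add_sum_sdiff _ _ _
    calc ∑ x ∈ Xc j \ Xh, dist x (f j) + ∑ x ∈ F j, dist x (f j)
        ≤ ∑ x ∈ Xc j \ Xh, dist x (f j) + (∑ x ∈ F j, dist x (μ x) + ∑ x ∈ F j, dist (μ x) (f j)) := by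
          linarith
      _ = ∑ x ∈ Xc j, dist x (f j) + ∑ x ∈ F j, dist x (μ x) := by
          rw [hsum_img j]; linarith [hsplit]
  calc ∑ j, ∑ x ∈ (Xc j \ Xh) ∪ F j, dist x (f j)
      ≤ ∑ j, (∑ x ∈ Xc j, dist x (f j) + ∑ x ∈ F j, dist x (μ x)) :=
        Finset.sum_le_sum fun j _ => step1 j
    _ = ∑ j, ∑ x ∈ Xc j, dist x (f j) + ∑ j, ∑ x ∈ F j, dist x (μ x) :=
        Finset.sum_add_distrib
    _ ≤ ∑ j, ∑ x ∈ Xc j, dist x (f j) + ∑ x ∈ X₀, dist x (μ x) := by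
        gcongr
        have hpd : ((Finset.univ : Finset (Fin k)) : Set (Fin k)).PairwiseDisjoint F := by
          intro i _ j _ hij
          refine Finset.disjoint_left.mpr fun x hxi hxj => ?_
          simp only [hF, Finset.mem_filter, Finset.mem_inter] at hxi hxj
          exact Finset.disjoint_left.mp (hdisj i j hij) hxi.2.1 hxj.2.1
        rw [← Finset.sum_biUnion hpd]
        refine Finset.sum_le_sum_of_subset_of_nonneg ?_ fun _ _ _ => dist_nonneg
        exact Finset.biUnion_subset.mpr fun j _ => hFsub j
end

section
/- In the setting of the swapped partition, for z = 2 and any ε > 0: ∑_{j=1}^k ∑_{x ∈ X'_j} D(x, f_j)² ≤ (1+√ε) · ∑_{j=1}^k ∑_{x ∈ X_j} D(x, f_j)² + (1 + 1/√ε) · ∑_{x ∈ X₀} D(x, μ̂(x))². -/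
theorem stmt_12 {𝒳 : Type*} [MetricSpace 𝒳] [DecidableEq 𝒳]
    (X X₀ Xh : Finset 𝒳) (k : ℕ) (Xc : Fin k → Finset 𝒳) (f : Fin k → 𝒳) (μ : 𝒳 → 𝒳)
    (ε : ℝ) (hε : 0 < ε)
    (h0 : X₀ ⊆ X) (hh : Xh ⊆ X) (hcard : Xh.card = X₀.card)
    (hdisj : ∀ i j, i ≠ j → Disjoint (Xc i) (Xc j))
    (hdisj0 : ∀ i, Disjoint X₀ (Xc i))
    (hcover : X₀ ∪ Finset.univ.biUnion Xc = X)
    (hbij : Set.BijOn μ ↑X₀ ↑Xh)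
    (hid : ∀ x ∈ X₀ ∩ Xh, μ x = x) :
    ∑ j, ∑ x ∈ (Xc j \ Xh) ∪ X₀.filter (fun x => μ x ∈ Xc j ∩ Xh), dist x (f j) ^ 2
      ≤ (1 + Real.sqrt ε) * ∑ j, ∑ x ∈ Xc j, dist x (f j) ^ 2
        + (1 + 1 / Real.sqrt ε) * ∑ x ∈ X₀, dist x (μ x) ^ 2 := by
  set s := Real.sqrt ε with hsdef
  have hs : 0 < s := Real.sqrt_pos.mpr hε
  set B : Fin k → Finset 𝒳 := fun j => X₀.filter (fun x => μ x ∈ Xc j ∩ Xh) with hB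
  have hBsub : ∀ j, B j ⊆ X₀ := fun j => Finset.filter_subset _ _
  -- pointwise inequality
  have key : ∀ (x : 𝒳) (j : Fin k),
      dist x (f j) ^ 2 ≤ (1 + 1 / s) * dist x (μ x) ^ 2 + (1 + s) * dist (μ x) (f j) ^ 2 := by
    intro x j
    have htri : dist x (f j) ≤ dist x (μ x) + dist (μ x) (f j) := dist_triangle _ _ _
    have ha : (0:ℝ) ≤ dist x (μ x) := dist_nonneg
    have hb : (0:ℝ) ≤ dist (μ x) (f j) := dist_nonneg
    have hd : (0:ℝ) ≤ dist x (f j) := dist_nonneg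
    have h1 : dist x (f j) ^ 2 ≤ (dist x (μ x) + dist (μ x) (f j)) ^ 2 :=
      pow_le_pow_left₀ hd htri 2
    have h2 : (1 / s) * (dist x (μ x) - s * dist (μ x) (f j)) ^ 2
        = (1 / s) * dist x (μ x) ^ 2 + s * dist (μ x) (f j) ^ 2
          - 2 * dist x (μ x) * dist (μ x) (f j) := by
      field_simp
      ring
    have h3 : 0 ≤ (1 / s) * (dist x (μ x) - s * dist (μ x) (f j)) ^ 2 :=
      mul_nonneg (by positivity) (sq_nonneg _)
    nlinarith [h1, h2, h3]
  -- per-j bound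
  have hsum_j : ∀ j, ∑ x ∈ (Xc j \ Xh) ∪ B j, dist x (f j) ^ 2
      ≤ (1 + s) * ∑ x ∈ Xc j, dist x (f j) ^ 2
        + (1 + 1 / s) * ∑ x ∈ B j, dist x (μ x) ^ 2 := by
    intro j
    have hAB : Disjoint (Xc j \ Xh) (B j) := by
      refine Finset.disjoint_left.mpr ?_
      intro x hx hxB
      exact (Finset.disjoint_right.mp (hdisj0 j)) (Finset.mem_sdiff.mp hx).1 (hBsub j hxB)
    rw [Finset.sum_union hAB]
    have h2 : ∑ x ∈ B j, dist x (f j) ^ 2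
        ≤ (1 + 1 / s) * ∑ x ∈ B j, dist x (μ x) ^ 2
          + (1 + s) * ∑ x ∈ B j, dist (μ x) (f j) ^ 2 := by
      rw [Finset.mul_sum, Finset.mul_sum, ← Finset.sum_add_distrib]
      exact Finset.sum_le_sum fun x _ => key x j
    have h3 : ∑ x ∈ B j, dist (μ x) (f j) ^ 2 ≤ ∑ y ∈ Xc j ∩ Xh, dist y (f j) ^ 2 := by
      have hinj : Set.InjOn μ (B j : Set 𝒳) := hbij.injOn.mono (by
        intro x hx; exact (hBsub j) hx)
      have heq : ∑ y ∈ (B j).image μ, dist y (f j) ^ 2 = ∑ x ∈ B j, dist (μ x) (f j) ^ 2 :=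
        Finset.sum_image (fun x hx y hy h => hinj hx hy h)
      rw [← heq]
      refine Finset.sum_le_sum_of_subset_of_nonneg ?_ (fun _ _ _ => sq_nonneg _)
      intro y hy
      obtain ⟨x, hx, rfl⟩ := Finset.mem_image.mp hy
      exact (Finset.mem_filter.mp hx).2
    have h4 : ∑ x ∈ Xc j ∩ Xh, dist x (f j) ^ 2 + ∑ x ∈ Xc j \ Xh, dist x (f j) ^ 2
        = ∑ x ∈ Xc j, dist x (f j) ^ 2 := Finset.sum_inter_add_sum_sdiff _ _ _
    have h5 : 0 ≤ ∑ x ∈ Xc j \ Xh, dist x (f j) ^ 2 :=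
      Finset.sum_nonneg fun _ _ => sq_nonneg _
    nlinarith [mul_nonneg hs.le h5]
  -- sum over j
  have hstep : ∑ j, ∑ x ∈ (Xc j \ Xh) ∪ B j, dist x (f j) ^ 2
      ≤ ∑ j, ((1 + s) * ∑ x ∈ Xc j, dist x (f j) ^ 2
        + (1 + 1 / s) * ∑ x ∈ B j, dist x (μ x) ^ 2) :=
    Finset.sum_le_sum fun j _ => hsum_j j
  have hBpd : Set.PairwiseDisjoint (Finset.univ : Finset (Fin k)) B := by
    intro i _ j _ hij
    refine Finset.disjoint_left.mpr ?_
    intro x hxi hxj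
    have h1 := (Finset.mem_inter.mp (Finset.mem_filter.mp hxi).2).1
    have h2 := (Finset.mem_inter.mp (Finset.mem_filter.mp hxj).2).1
    exact (Finset.disjoint_left.mp (hdisj i j hij)) h1 h2
  have hBX0 : ∑ j, ∑ x ∈ B j, dist x (μ x) ^ 2 ≤ ∑ x ∈ X₀, dist x (μ x) ^ 2 := by
    rw [← Finset.sum_biUnion hBpd]
    refine Finset.sum_le_sum_of_subset_of_nonneg ?_ (fun _ _ _ => sq_nonneg _)
    intro x hx
    obtain ⟨j, _, hxj⟩ := Finset.mem_biUnion.mp hx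
    exact hBsub j hxj
  have h1s : (0:ℝ) ≤ 1 + 1 / s := by positivity
  calc ∑ j, ∑ x ∈ (Xc j \ Xh) ∪ B j, dist x (f j) ^ 2
      ≤ ∑ j, ((1 + s) * ∑ x ∈ Xc j, dist x (f j) ^ 2
        + (1 + 1 / s) * ∑ x ∈ B j, dist x (μ x) ^ 2) := hstep
    _ = (1 + s) * ∑ j, ∑ x ∈ Xc j, dist x (f j) ^ 2
        + (1 + 1 / s) * ∑ j, ∑ x ∈ B j, dist x (μ x) ^ 2 := by
        rw [Finset.sum_add_distrib, ← Finset.mul_sum, ← Finset.mul_sum]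
    _ ≤ (1 + s) * ∑ j, ∑ x ∈ Xc j, dist x (f j) ^ 2
        + (1 + 1 / s) * ∑ x ∈ X₀, dist x (μ x) ^ 2 := by
        gcongr
end

section
/- Let A, B be finite subsets of a metric space with |A| = |B| = m and let μ̂ : A → B be a bijection that is the identity on A ∩ B and satisfies ∑_{x∈A} D(x, μ̂(x)) ≤ δ. Let X be a finite set containing A, with partition A, X₁, …, X_k, centers f₁, …, f_k, and total cost V = ∑_j ∑_{x∈X_j} D(x, f_j). Define X'_j = (X_j ∖ (X_j ∩ B)) ∪ μ̂⁻¹(X_j ∩ B). Then ∑_j ∑_{x ∈ X'_j} D(x, f_j) ≤ V + δ. -/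
theorem stmt_17 {𝒳 : Type*} [MetricSpace 𝒳] [DecidableEq 𝒳] (m : ℕ)
    (A B X : Finset 𝒳) (hA : A.card = m) (hB : B.card = m) (hAX : A ⊆ X)
    (k : ℕ) (Xc : Fin k → Finset 𝒳) (f : Fin k → 𝒳) (μ : 𝒳 → 𝒳) (δ : ℝ)
    (hdisj : ∀ i j, i ≠ j → Disjoint (Xc i) (Xc j))
    (hdisj0 : ∀ i, Disjoint A (Xc i))
    (hcover : A ∪ Finset.univ.biUnion Xc = X)
    (hbij : Set.BijOn μ ↑A ↑B)
    (hid : ∀ x ∈ A ∩ B, μ x = x)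
    (hδ : ∑ x ∈ A, dist x (μ x) ≤ δ) :
    ∑ j, ∑ x ∈ (Xc j \ (Xc j ∩ B)) ∪ A.filter (fun x => μ x ∈ Xc j ∩ B), dist x (f j)
      ≤ (∑ j, ∑ x ∈ Xc j, dist x (f j)) + δ := by
  set g : 𝒳 → ℝ := fun x => dist x (μ x) with hg
  have hdisjset : ∀ j : Fin k,
      Disjoint (Xc j \ (Xc j ∩ B)) (A.filter (fun x => μ x ∈ Xc j ∩ B)) := by
    intro j
    refine Finset.disjoint_left.2 fun x hx hx' => ?_
    exact Finset.disjoint_left.1 (hdisj0 j) (Finset.mem_filter.1 hx').1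
      (Finset.mem_sdiff.1 hx).1
  have key : ∀ j : Fin k,
      ∑ x ∈ (Xc j \ (Xc j ∩ B)) ∪ A.filter (fun x => μ x ∈ Xc j ∩ B), dist x (f j)
        ≤ ∑ x ∈ Xc j, dist x (f j) + ∑ x ∈ A.filter (fun x => μ x ∈ Xc j ∩ B), g x := by
    intro j
    rw [Finset.sum_union (hdisjset j)]
    have h1 : ∑ x ∈ A.filter (fun x => μ x ∈ Xc j ∩ B), dist x (f j)
        ≤ ∑ x ∈ A.filter (fun x => μ x ∈ Xc j ∩ B), (g x + dist (μ x) (f j)) :=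
      Finset.sum_le_sum fun x _ => dist_triangle x (μ x) (f j)
    rw [Finset.sum_add_distrib] at h1
    have h2 : ∑ x ∈ A.filter (fun x => μ x ∈ Xc j ∩ B), dist (μ x) (f j)
        = ∑ y ∈ Xc j ∩ B, dist y (f j) := by
      apply Finset.sum_bij (fun x _ => μ x)
      · intro x hx; exact (Finset.mem_filter.1 hx).2
      · intro a ha b hb h
        exact hbij.injOn (Finset.mem_coe.2 (Finset.mem_filter.1 ha).1)
          (Finset.mem_coe.2 (Finset.mem_filter.1 hb).1) h
      · intro y hy
        obtain ⟨x, hxA, hxy⟩ := hbij.surjOn (Finset.mem_coe.2 (Finset.mem_inter.1 hy).2)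
        exact ⟨x, Finset.mem_filter.2 ⟨Finset.mem_coe.1 hxA, by rw [hxy]; exact hy⟩, hxy⟩
      · intro x hx; rfl
    have h3 : ∑ x ∈ Xc j \ (Xc j ∩ B), dist x (f j) + ∑ y ∈ Xc j ∩ B, dist y (f j)
        = ∑ x ∈ Xc j, dist x (f j) := Finset.sum_sdiff Finset.inter_subset_left
    linarith
  calc ∑ j, ∑ x ∈ (Xc j \ (Xc j ∩ B)) ∪ A.filter (fun x => μ x ∈ Xc j ∩ B), dist x (f j)
      ≤ ∑ j, (∑ x ∈ Xc j, dist x (f j) + ∑ x ∈ A.filter (fun x => μ x ∈ Xc j ∩ B), g x) :=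
        Finset.sum_le_sum fun j _ => key j
    _ = (∑ j, ∑ x ∈ Xc j, dist x (f j))
        + ∑ j, ∑ x ∈ A.filter (fun x => μ x ∈ Xc j ∩ B), g x := Finset.sum_add_distrib
    _ ≤ (∑ j, ∑ x ∈ Xc j, dist x (f j)) + δ := by
        have hpd : ∀ i ∈ (Finset.univ : Finset (Fin k)), ∀ j ∈ Finset.univ, i ≠ j →
            Disjoint (A.filter (fun x => μ x ∈ Xc i ∩ B))
              (A.filter (fun x => μ x ∈ Xc j ∩ B)) := by
          intro i _ j _ hij
          refine Finset.disjoint_left.2 fun x hx hx' => ?_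
          exact Finset.disjoint_left.1 (hdisj i j hij)
            (Finset.mem_inter.1 (Finset.mem_filter.1 hx).2).1
            (Finset.mem_inter.1 (Finset.mem_filter.1 hx').2).1
        have := (Finset.sum_biUnion hpd (f := g)).symm
        have hsub : Finset.univ.biUnion (fun j => A.filter (fun x => μ x ∈ Xc j ∩ B)) ⊆ A := by
          intro x hx
          obtain ⟨j, _, hx⟩ := Finset.mem_biUnion.1 hx
          exact (Finset.mem_filter.1 hx).1
        have hle : ∑ x ∈ Finset.univ.biUnion (fun j => A.filter (fun x => μ x ∈ Xc j ∩ B)), g x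
            ≤ ∑ x ∈ A, g x :=
          Finset.sum_le_sum_of_subset_of_nonneg hsub (fun x _ _ => dist_nonneg)
        linarith
end
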